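/- Let H_U, H_Y be real Hilbert spaces, V_U ⊆ H_U, V_Y ⊆ H_Y closed subspaces with inclusions ι_U, ι_Y and orthogonal projection π : H_U →L[ℝ] V_U. Let K : H_U →L[ℝ] H_Y, K' : V_U →L[ℝ] V_Y with ‖K‖ ≤ C, ‖K'‖ ≤ C and ‖K − ι_Y ∘ K' ∘ π‖ ≤ a; let β > 0 with 4 C a ≤ β and set b := 4 β⁻¹ C a, and assume b ≤ 0.1. Let G = K† ∘ K + β • 1 with continuous inverse G⁻¹, and G' = (K')† ∘ K' + β • 1 with continuous inverse (G')⁻¹. Let W' : V_U →L[ℝ] V_U be positive definite with |Real.log ⟪W' v, v⟫ − Real.log ⟪(G')⁻¹ v, v⟫| ≤ d for all v ≠ 0, where 0 ≤ d < 0.2. Define E(W') = ι_U ∘ W' ∘ π + β⁻¹ • (1 − ι_U ∘ π) and the Newton iterate W := 2 • E(W') − E(W') ∘ G ∘ E(W'). Then W is positive definite and for every u ∈ H_U with u ≠ 0, |Real.log ⟪W u, u⟫ − Real.log ⟪G⁻¹ u, u⟫| ≤ 2 (d + b)². Moreover 2(d + b)² < 0.2. -/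

import Mathlib

open scoped RealInnerProductSpace

lemma mls_log_le {p q c : ℝ} (hp : 0 < p) (hq : 0 < q)
    (h1 : p ≤ Real.exp c * q) (h2 : q ≤ Real.exp c * p) :
    |Real.log p - Real.log q| ≤ c := by
  rw [abs_le]
  constructor
  · have : Real.log q ≤ Real.log (Real.exp c * p) := Real.log_le_log hq h2
    rw [Real.log_mul (Real.exp_ne_zero c) hp.ne', Real.log_exp] at this
    linarith
  · have : Real.log p ≤ Real.log (Real.exp c * q) := Real.log_le_log hp h1
    rw [Real.log_mul (Real.exp_ne_zero c) hq.ne', Real.log_exp] at this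
    linarith

lemma mls_of_log {p q c : ℝ} (hp : 0 < p) (hq : 0 < q)
    (h : |Real.log p - Real.log q| ≤ c) :
    p ≤ Real.exp c * q ∧ q ≤ Real.exp c * p := by
  rw [abs_le] at h
  constructor
  · have : p = Real.exp (Real.log p) := (Real.exp_log hp).symm
    rw [this, ← Real.exp_log hq, ← Real.exp_add]
    exact Real.exp_le_exp.mpr (by linarith)
  · have : q = Real.exp (Real.log q) := (Real.exp_log hq).symm
    rw [this, ← Real.exp_log hp, ← Real.exp_add]
    exact Real.exp_le_exp.mpr (by linarith)


lemma mls_scalar {e : ℝ} (h0 : 0 ≤ e) (h3 : e ≤ 3/10) :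
    Real.exp e + Real.exp (-(e + 2 * e ^ 2)) ≤ 2 := by
  have hx : 0 ≤ e + 2 * e ^ 2 := by nlinarith
  have h1 : Real.exp e ≤ 1 + e + e ^ 2 / 2 + 2/9 * e ^ 3 := by
    have H := Real.exp_bound (x := e) (by rw [abs_of_nonneg h0]; linarith) (n := 3) (by norm_num)
    rw [abs_of_nonneg h0] at H
    have h4 : ∑ m ∈ Finset.range 3, e ^ m / m.factorial = 1 + e + e ^ 2 / 2 := by
      norm_num [Finset.sum_range_succ, Nat.factorial]
    rw [h4] at H
    have H2 := (abs_le.mp H).2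
    norm_num [Nat.factorial] at H2
    linarith
  have h2 : Real.exp (-(e + 2 * e ^ 2)) ≤ 1 - (e + 2*e^2) + (e + 2*e^2) ^ 2 / 2 := by
    have hq := Real.quadratic_le_exp_of_nonneg hx
    have hpos : (0:ℝ) < 1 + (e + 2*e^2) + (e + 2*e^2) ^ 2 / 2 := by nlinarith
    have hinv : Real.exp (-(e + 2 * e ^ 2)) ≤ (1 + (e + 2*e^2) + (e + 2*e^2) ^ 2 / 2)⁻¹ := by
      rw [Real.exp_neg]; exact inv_anti₀ hpos hq
    refine hinv.trans ?_
    rw [inv_le_iff_one_le_mul₀ hpos]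
    nlinarith [sq_nonneg (e + 2*e^2), sq_nonneg e]
  nlinarith [sq_nonneg e, pow_nonneg h0 3, pow_nonneg h0 4, sq_nonneg (e*(3/10 - e))]


lemma mls_key2 {e : ℝ} (h0 : 0 ≤ e) (h3 : e ≤ 3/10) :
    Real.exp (-(2 * e ^ 2)) ≤ 1 - (Real.exp e - 1) ^ 2 := by
  have h2e := mls_scalar h0 h3
  have h5 : Real.exp (-(e + 2 * e ^ 2)) ≤ 2 - Real.exp e := by linarith
  have hsplit : Real.exp (-(2 * e ^ 2)) = Real.exp e * Real.exp (-(e + 2 * e ^ 2)) := by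
    rw [← Real.exp_add]; ring_nf
  rw [hsplit]
  calc Real.exp e * Real.exp (-(e + 2 * e ^ 2))
      ≤ Real.exp e * (2 - Real.exp e) :=
        mul_le_mul_of_nonneg_left h5 (Real.exp_pos _).le
    _ = 1 - (Real.exp e - 1) ^ 2 := by ring

lemma mls_final {d b : ℝ} (hd0 : 0 ≤ d) (hd2 : d < 1/5) (hb0 : 0 ≤ b) (hb1 : b ≤ 1/10) :
    2 * (d + b) ^ 2 < 1/5 := by nlinarith

section
variable {H : Type*} [NormedAddCommGroup H] [InnerProductSpace ℝ H]

lemma mls_inv_form_le (X Xinv Y Yinv : H →L[ℝ] H)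
    (hXsym : ∀ x y : H, ⟪X x, y⟫ = ⟪x, X y⟫)
    (hXpos : ∀ w : H, 0 ≤ ⟪X w, w⟫)
    (hX1 : ∀ u : H, X (Xinv u) = u)
    (hY1 : ∀ u : H, Y (Yinv u) = u)
    (h : ∀ w : H, ⟪X w, w⟫ ≤ ⟪Y w, w⟫) (u : H) :
    ⟪Yinv u, u⟫ ≤ ⟪Xinv u, u⟫ := by
  set w := Yinv u with hw
  set z := Xinv u with hz
  have key : ⟪X (w - z), w - z⟫ = ⟪X w, w⟫ - 2 * ⟪u, w⟫ + ⟪z, u⟫ := by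
    have hXz : X z = u := hX1 u
    rw [map_sub, inner_sub_left, inner_sub_right, inner_sub_right, hXz]
    have h1 : ⟪X w, z⟫ = ⟪w, u⟫ := by rw [hXsym, hXz]
    rw [h1, real_inner_comm u w, real_inner_comm u z, real_inner_comm z u]
    ring
  have hYw : ⟪Y w, w⟫ = ⟪u, w⟫ := by rw [hw, hY1]
  have h2 : ⟪Yinv u, u⟫ = 2 * ⟪u, w⟫ - ⟪Y w, w⟫ := by
    rw [hYw, ← hw, real_inner_comm]; ring
  have h3 := h w
  have h4 := hXpos (w - z)
  have h5 : ⟪z, u⟫ = ⟪Xinv u, u⟫ := rfl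
  linarith [key, h2, h3, h4]

lemma mls_newton (Gop D : H →L[ℝ] H)
    (hGsym : ∀ x y : H, ⟪Gop x, y⟫ = ⟪x, Gop y⟫)
    (hGpos : ∀ w : H, 0 ≤ ⟪Gop w, w⟫)
    (hDsym : ∀ x y : H, ⟪D x, y⟫ = ⟪x, D y⟫)
    (s : ℝ) (hs : 0 ≤ s)
    (hD : ∀ x : H, |⟪D (Gop x), Gop x⟫| ≤ s * ⟪Gop x, x⟫) (v : H) :
    ⟪Gop (D (Gop v)), D (Gop v)⟫ ≤ s ^ 2 * ⟪Gop v, v⟫ := by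
  -- B x y := ⟪D (Gop x), Gop y⟫ ; [x,y] := ⟪Gop x, y⟫
  set T := fun x : H => D (Gop x) with hT
  have hBsym : ∀ x y : H, ⟪T x, Gop y⟫ = ⟪T y, Gop x⟫ := by
    intro x y
    rw [hT]
    simp only
    rw [hDsym, real_inner_comm]
  -- polarization inequality: 4 B x y ≤ 2 s ([x,x] + [y,y])
  have pol : ∀ x y : H, 4 * ⟪T x, Gop y⟫ ≤ 2 * s * (⟪Gop x, x⟫ + ⟪Gop y, y⟫) := by
    intro x y
    have e1 : ⟪T (x + y), Gop (x + y)⟫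
        = ⟪T x, Gop x⟫ + 2 * ⟪T x, Gop y⟫ + ⟪T y, Gop y⟫ := by
      simp only [hT, map_add, inner_add_left, inner_add_right]
      have := hBsym x y
      simp only [hT] at this
      linarith [this]
    have e2 : ⟪T (x - y), Gop (x - y)⟫
        = ⟪T x, Gop x⟫ - 2 * ⟪T x, Gop y⟫ + ⟪T y, Gop y⟫ := by
      simp only [hT, map_sub, inner_sub_left, inner_sub_right]
      have := hBsym x y
      simp only [hT] at this
      linarith [this]
    have e3 : ⟪Gop (x + y), x + y⟫ + ⟪Gop (x - y), x - y⟫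
        = 2 * (⟪Gop x, x⟫ + ⟪Gop y, y⟫) := by
      simp only [map_add, map_sub, inner_add_left, inner_add_right, inner_sub_left,
        inner_sub_right]
      have := hGsym x y
      have := real_inner_comm (Gop x) y
      have := real_inner_comm (Gop y) x
      linarith [hGsym x y, hGsym y x, real_inner_comm x (Gop y), real_inner_comm y (Gop x)]
    have b1 := (abs_le.mp (hD (x + y))).2
    have b2 := (abs_le.mp (hD (x - y))).1
    simp only [hT] at e1 e2 ⊢
    nlinarith [b1, b2, e1, e2, e3]
  have hP0 : 0 ≤ ⟪Gop (T v), T v⟫ := hGpos (T v)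
  have hcomm : ⟪T v, Gop (T v)⟫ = ⟪Gop (T v), T v⟫ := real_inner_comm _ _
  rcases eq_or_lt_of_le hs with hs0 | hs0
  · have h0 := pol v (T v)
    rw [hcomm] at h0
    rw [← hs0] at h0 ⊢
    nlinarith [h0, hGpos v]
  · have h0 := pol (s • v) (T v)
    have hTs : T (s • v) = s • T v := by
      simp only [hT, map_smul]
    rw [hTs, real_inner_smul_left, hcomm, map_smul, inner_smul_left, real_inner_smul_right] at h0
    simp only [starRingEnd_apply, star_trivial] at h0
    nlinarith [h0, hGpos v, hP0]

end

section
set_option linter.unusedSectionVars false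
variable {H : Type*} [NormedAddCommGroup H] [InnerProductSpace ℝ H] [CompleteSpace H]
  (V : Submodule ℝ H) [CompleteSpace V]

lemma mls_coe_inner (x : V) (u : H) :
    ⟪(x : H), u⟫ = ⟪x, V.orthogonalProjectionOnto u⟫ := by
  have hmem : u - ↑(V.orthogonalProjectionOnto u) ∈ Vᗮ := Submodule.sub_starProjection_mem_orthogonal (K := V) u
  have h0 : ⟪(x : H), u - ↑(V.orthogonalProjectionOnto u)⟫ = 0 :=
    (Submodule.mem_orthogonal V _).mp hmem x x.2
  have : ⟪(x : H), u⟫ = ⟪(x : H), (↑(V.orthogonalProjectionOnto u) : H)⟫ := by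
    have := inner_sub_right (𝕜 := ℝ) (x : H) u (↑(V.orthogonalProjectionOnto u))
    rw [h0] at this
    linarith [this]
  rw [this, ← Submodule.coe_inner]

lemma mls_pyth (u : H) :
    ‖((V.orthogonalProjectionOnto u : V) : H)‖ ^ 2 + ‖u - ↑(V.orthogonalProjectionOnto u)‖ ^ 2
      = ‖u‖ ^ 2 := by
  set p : H := ↑(V.orthogonalProjectionOnto u) with hp
  have horth : ⟪p, u - p⟫ = 0 :=
    (Submodule.mem_orthogonal V _).mp (Submodule.sub_starProjection_mem_orthogonal (K := V) u : u - ↑(V.orthogonalProjectionOnto u) ∈ Vᗮ) p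
      (V.orthogonalProjectionOnto u).2
  have hsum : p + (u - p) = u := by abel
  have := norm_add_sq_real p (u - p)
  rw [hsum, horth] at this
  linarith

lemma mls_ext_apply (A : V →L[ℝ] V) (c : ℝ) (u : H) :
    (V.subtypeL.comp (A.comp (V.orthogonalProjectionOnto)) +
      c • (1 - V.subtypeL.comp (V.orthogonalProjectionOnto))) u
      = ↑(A (V.orthogonalProjectionOnto u)) + c • (u - ↑(V.orthogonalProjectionOnto u)) := by
  simp [ContinuousLinearMap.add_apply, ContinuousLinearMap.comp_apply,
    ContinuousLinearMap.smul_apply, ContinuousLinearMap.sub_apply,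
    ContinuousLinearMap.one_apply, Submodule.subtypeL_apply]

lemma mls_ext_inner (A : V →L[ℝ] V) (c : ℝ) (u v : H) :
    ⟪(V.subtypeL.comp (A.comp (V.orthogonalProjectionOnto)) +
      c • (1 - V.subtypeL.comp (V.orthogonalProjectionOnto))) u, v⟫
      = ⟪A (V.orthogonalProjectionOnto u), V.orthogonalProjectionOnto v⟫
        + c * (⟪u, v⟫ - ⟪V.orthogonalProjectionOnto u, V.orthogonalProjectionOnto v⟫) := by
  rw [mls_ext_apply, inner_add_left, real_inner_smul_left, mls_coe_inner, inner_sub_left]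
  have : ⟪(↑(V.orthogonalProjectionOnto u) : H), v⟫
      = ⟪V.orthogonalProjectionOnto u, V.orthogonalProjectionOnto v⟫ := mls_coe_inner V _ v
  rw [this]

lemma mls_ext_form (A : V →L[ℝ] V) (c : ℝ) (u : H) :
    ⟪(V.subtypeL.comp (A.comp (V.orthogonalProjectionOnto)) +
      c • (1 - V.subtypeL.comp (V.orthogonalProjectionOnto))) u, u⟫
      = ⟪A (V.orthogonalProjectionOnto u), V.orthogonalProjectionOnto u⟫
        + c * ‖u - ↑(V.orthogonalProjectionOnto u)‖ ^ 2 := by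
  rw [mls_ext_inner]
  congr 1
  set p := V.orthogonalProjectionOnto u with hp
  have hmem : u - ↑(V.orthogonalProjectionOnto u) ∈ Vᗮ := Submodule.sub_starProjection_mem_orthogonal (K := V) u
  have h0 : ⟪(↑p : H), u - ↑p⟫ = 0 := (Submodule.mem_orthogonal V _).mp hmem _ p.2
  have hpu : ⟪(↑p : H), u⟫ = ⟪(↑p : H), (↑p : H)⟫ := by
    have h := inner_sub_right (𝕜 := ℝ) (↑p : H) u (↑p : H)
    rw [h0] at h
    linarith
  have e := real_inner_self_eq_norm_sq (u - (↑p : H))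
  have e2 : ⟪u - (↑p : H), u - (↑p : H)⟫
      = ⟪u, u⟫ - 2 * ⟪(↑p : H), u⟫ + ⟪(↑p : H), (↑p : H)⟫ := by
    rw [inner_sub_left, inner_sub_right, inner_sub_right, real_inner_comm u ((↑p : H))]
    ring
  have hBB : (⟪p, p⟫ : ℝ) = ⟪(↑p : H), (↑p : H)⟫ := Submodule.coe_inner V p p
  have : ⟪u, u⟫ - (⟪p, p⟫ : ℝ) = ‖u - (↑p : H)‖ ^ 2 := by linarith
  rw [this]

lemma mls_ext_inv (A Ainv : V →L[ℝ] V) (c : ℝ) (hc : c ≠ 0)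
    (hA : ∀ x : V, A (Ainv x) = x) (u : H) :
    (V.subtypeL.comp (A.comp (V.orthogonalProjectionOnto)) +
      c • (1 - V.subtypeL.comp (V.orthogonalProjectionOnto)))
    ((V.subtypeL.comp (Ainv.comp (V.orthogonalProjectionOnto)) +
      c⁻¹ • (1 - V.subtypeL.comp (V.orthogonalProjectionOnto))) u) = u := by
  rw [mls_ext_apply, mls_ext_apply]
  set p := V.orthogonalProjectionOnto u with hp
  have hπ : V.orthogonalProjectionOnto (↑(Ainv p) + c⁻¹ • (u - ↑p)) = Ainv p := by
    rw [map_add, map_smul, map_sub]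
    simp [Submodule.orthogonalProjectionOnto_mem_subspace_eq_self, ← hp]
  rw [hπ, hA]
  have : (↑(Ainv p) : H) + c⁻¹ • (u - ↑p) - ↑(Ainv p) = c⁻¹ • (u - ↑p) := by abel
  rw [this, smul_smul, mul_inv_cancel₀ hc, one_smul]
  abel

end

set_option maxHeartbeats 4000000 in
/-- Intermediate-level recursion step of the multilevel convergence proof:
`d_j ≤ 2 (d_{j+1} + b_j)²` for the Newton-corrected two-level operator
`W = 2 E(W') - E(W') G E(W')`, together with positive definiteness of `W`
and the bound `2 (d + b)² < 0.2`. -/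
theorem multilevel_recursion_step
    {HU HY : Type*} [NormedAddCommGroup HU] [InnerProductSpace ℝ HU] [CompleteSpace HU]
    [NormedAddCommGroup HY] [InnerProductSpace ℝ HY] [CompleteSpace HY]
    (VU : Submodule ℝ HU) [CompleteSpace VU]
    (VY : Submodule ℝ HY) [CompleteSpace VY]
    (K : HU →L[ℝ] HY) (K' : VU →L[ℝ] VY) (C a : ℝ)
    (hKC : ‖K‖ ≤ C) (hK'C : ‖K'‖ ≤ C) (ha0 : 0 ≤ a)
    (ha : ‖K - VY.subtypeL.comp (K'.comp (VU.orthogonalProjectionOnto))‖ ≤ a)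
    (β : ℝ) (hβ : 0 < β) (hβa : 4 * C * a ≤ β)
    (b : ℝ) (hb : b = 4 * β⁻¹ * C * a) (hb1 : b ≤ 0.1)
    (G Ginv : HU →L[ℝ] HU)
    (hG : G = (ContinuousLinearMap.adjoint K).comp K + β • 1)
    (hG1 : G.comp Ginv = 1) (hG2 : Ginv.comp G = 1)
    (G' G'inv : VU →L[ℝ] VU)
    (hG' : G' = (ContinuousLinearMap.adjoint K').comp K' + β • 1)
    (hG'1 : G'.comp G'inv = 1) (hG'2 : G'inv.comp G' = 1)
    (W' : VU →L[ℝ] VU)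
    (hW'sa : IsSelfAdjoint W') (hW'pos : ∀ v : VU, v ≠ 0 → 0 < ⟪W' v, v⟫)
    (d : ℝ) (hd0 : 0 ≤ d) (hd2 : d < 0.2)
    (hW'd : ∀ v : VU, v ≠ 0 → |Real.log ⟪W' v, v⟫ - Real.log ⟪G'inv v, v⟫| ≤ d)
    (EW' : HU →L[ℝ] HU)
    (hEW' : EW' = VU.subtypeL.comp (W'.comp (VU.orthogonalProjectionOnto)) +
      β⁻¹ • (1 - VU.subtypeL.comp (VU.orthogonalProjectionOnto)))
    (W : HU →L[ℝ] HU) (hW : W = (2 : ℝ) • EW' - EW'.comp (G.comp EW')) :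
    (IsSelfAdjoint W ∧ ∀ u : HU, u ≠ 0 → 0 < ⟪W u, u⟫) ∧
      (∀ u : HU, u ≠ 0 →
        |Real.log ⟪W u, u⟫ - Real.log ⟪Ginv u, u⟫| ≤ 2 * (d + b) ^ 2) ∧
      2 * (d + b) ^ 2 < 0.2 := by
    -- scalar preliminaries
  have hC0 : 0 ≤ C := le_trans (norm_nonneg K) hKC
  have hb0 : 0 ≤ b := by rw [hb]; positivity
  have hε0 : 0 ≤ d + b := by linarith
  have hε3 : d + b ≤ 3 / 10 := by norm_num at hd2 hb1; linarith
  -- inverse application facts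
  have hG1' : ∀ u : HU, G (Ginv u) = u := fun u => by
    have h := ContinuousLinearMap.ext_iff.mp hG1 u; simpa using h
  have hG2' : ∀ u : HU, Ginv (G u) = u := fun u => by
    have h := ContinuousLinearMap.ext_iff.mp hG2 u; simpa using h
  have hG'1' : ∀ x : VU, G' (G'inv x) = x := fun x => by
    have h := ContinuousLinearMap.ext_iff.mp hG'1 x; simpa using h
  have hG'2' : ∀ x : VU, G'inv (G' x) = x := fun x => by
    have h := ContinuousLinearMap.ext_iff.mp hG'2 x; simpa using h
  -- forms of G and G'
  have hGform : ∀ x y : HU, ⟪G x, y⟫ = ⟪K x, K y⟫ + β * ⟪x, y⟫ := by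
    intro x y; rw [hG]
    simp only [ContinuousLinearMap.add_apply, ContinuousLinearMap.comp_apply,
      ContinuousLinearMap.smul_apply, ContinuousLinearMap.one_apply, inner_add_left]
    rw [ContinuousLinearMap.adjoint_inner_left, real_inner_smul_left]
  have hG'form : ∀ x y : VU, ⟪G' x, y⟫ = ⟪K' x, K' y⟫ + β * ⟪x, y⟫ := by
    intro x y; rw [hG']
    simp only [ContinuousLinearMap.add_apply, ContinuousLinearMap.comp_apply,
      ContinuousLinearMap.smul_apply, ContinuousLinearMap.one_apply, inner_add_left]
    rw [ContinuousLinearMap.adjoint_inner_left, real_inner_smul_left]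
  have hGsym : ∀ x y : HU, ⟪G x, y⟫ = ⟪x, G y⟫ := by
    intro x y
    rw [← real_inner_comm x (G y), hGform, hGform, real_inner_comm (K x) (K y),
      real_inner_comm x y]
  have hG'sym : ∀ x y : VU, ⟪G' x, y⟫ = ⟪x, G' y⟫ := by
    intro x y
    rw [← real_inner_comm x (G' y), hG'form, hG'form, real_inner_comm (K' x) (K' y),
      real_inner_comm x y]
  have hGcoer : ∀ w : HU, β * ‖w‖ ^ 2 ≤ ⟪G w, w⟫ := by
    intro w
    rw [hGform, real_inner_self_eq_norm_sq, real_inner_self_eq_norm_sq]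
    nlinarith [sq_nonneg ‖K w‖]
  have hG'coer : ∀ w : VU, β * ‖w‖ ^ 2 ≤ ⟪G' w, w⟫ := by
    intro w
    rw [hG'form, real_inner_self_eq_norm_sq, real_inner_self_eq_norm_sq]
    nlinarith [sq_nonneg ‖K' w‖]
  have hGpos : ∀ w : HU, 0 ≤ ⟪G w, w⟫ := by
    intro w
    have h2 : 0 ≤ β * ‖w‖ ^ 2 := by positivity
    linarith [hGcoer w]
  have hGposs : ∀ w : HU, w ≠ 0 → 0 < ⟪G w, w⟫ := by
    intro w hw
    have h1 : 0 < ‖w‖ := norm_pos_iff.mpr hw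
    have h2 : 0 < β * ‖w‖ ^ 2 := by positivity
    linarith [hGcoer w]
  have hG'poss : ∀ w : VU, w ≠ 0 → 0 < ⟪G' w, w⟫ := by
    intro w hw
    have h1 : 0 < ‖w‖ := norm_pos_iff.mpr hw
    have h2 : 0 < β * ‖w‖ ^ 2 := by positivity
    linarith [hG'coer w]
  -- symmetry and positivity of the inverses
  have hGinvsym : ∀ x y : HU, ⟪Ginv x, y⟫ = ⟪x, Ginv y⟫ := by
    intro x y
    calc ⟪Ginv x, y⟫ = ⟪Ginv x, G (Ginv y)⟫ := by rw [hG1']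
      _ = ⟪G (Ginv x), Ginv y⟫ := (hGsym _ _).symm
      _ = ⟪x, Ginv y⟫ := by rw [hG1']
  have hGinvform : ∀ u : HU, ⟪Ginv u, u⟫ = ⟪G (Ginv u), Ginv u⟫ := by
    intro u
    have h : ⟪G (Ginv u), Ginv u⟫ = ⟪Ginv u, u⟫ := by rw [hGsym, hG1']
    exact h.symm
  have hGinvnn : ∀ u : HU, 0 ≤ ⟪Ginv u, u⟫ := fun u => by
    rw [hGinvform u]; exact hGpos _
  have hGinvpos : ∀ u : HU, u ≠ 0 → 0 < ⟪Ginv u, u⟫ := by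
    intro u hu
    rw [hGinvform]
    refine hGposs _ (fun h0 => hu ?_)
    rw [← hG1' u, h0, map_zero]
  have hG'invform : ∀ x : VU, ⟪G'inv x, x⟫ = ⟪G' (G'inv x), G'inv x⟫ := by
    intro x
    have h : ⟪G' (G'inv x), G'inv x⟫ = ⟪G'inv x, x⟫ := by rw [hG'sym, hG'1']
    exact h.symm
  have hG'invnn : ∀ x : VU, 0 ≤ ⟪G'inv x, x⟫ := by
    intro x
    rw [hG'invform]
    have h2 : 0 ≤ β * ‖G'inv x‖ ^ 2 := by positivity
    linarith [hG'coer (G'inv x)]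
  have hG'invpos : ∀ x : VU, x ≠ 0 → 0 < ⟪G'inv x, x⟫ := by
    intro x hx
    rw [hG'invform]
    refine hG'poss _ (fun h0 => hx ?_)
    rw [← hG'1' x, h0, map_zero]
  -- W' facts
  have hW'sym : ∀ x y : VU, ⟪W' x, y⟫ = ⟪x, W' y⟫ := by
    intro x y
    have h := ContinuousLinearMap.isSelfAdjoint_iff_isSymmetric.mp hW'sa x y
    simpa using h
  -- the operators F and Gt
  set F : HU →L[ℝ] HU := VU.subtypeL.comp (G'inv.comp (VU.orthogonalProjectionOnto)) +
    β⁻¹ • (1 - VU.subtypeL.comp (VU.orthogonalProjectionOnto)) with hF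
  set Gt : HU →L[ℝ] HU := VU.subtypeL.comp (G'.comp (VU.orthogonalProjectionOnto)) +
    β • (1 - VU.subtypeL.comp (VU.orthogonalProjectionOnto)) with hGt
  have hEform : ∀ u : HU, ⟪EW' u, u⟫
      = ⟪W' (VU.orthogonalProjectionOnto u), VU.orthogonalProjectionOnto u⟫
        + β⁻¹ * ‖u - ↑(VU.orthogonalProjectionOnto u)‖ ^ 2 := by
    intro u; rw [hEW']; exact mls_ext_form VU W' β⁻¹ u
  have hFform : ∀ u : HU, ⟪F u, u⟫
      = ⟪G'inv (VU.orthogonalProjectionOnto u), VU.orthogonalProjectionOnto u⟫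
        + β⁻¹ * ‖u - ↑(VU.orthogonalProjectionOnto u)‖ ^ 2 := by
    intro u; rw [hF]; exact mls_ext_form VU G'inv β⁻¹ u
  have hGtform : ∀ u : HU, ⟪Gt u, u⟫
      = ⟪G' (VU.orthogonalProjectionOnto u), VU.orthogonalProjectionOnto u⟫
        + β * ‖u - ↑(VU.orthogonalProjectionOnto u)‖ ^ 2 := by
    intro u; rw [hGt]; exact mls_ext_form VU G' β u
  have hGtF : ∀ u : HU, Gt (F u) = u := by
    intro u; rw [hGt, hF]; exact mls_ext_inv VU G' G'inv β hβ.ne' hG'1' u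
  have hFGt : ∀ u : HU, F (Gt u) = u := by
    intro u
    have h := mls_ext_inv VU G'inv G' β⁻¹ (inv_ne_zero hβ.ne') hG'2' u
    rw [inv_inv] at h
    rw [hGt, hF]; exact h
  have hGtsym : ∀ x y : HU, ⟪Gt x, y⟫ = ⟪x, Gt y⟫ := by
    intro x y
    rw [← real_inner_comm x (Gt y), hGt]
    rw [mls_ext_inner VU G' β x y, mls_ext_inner VU G' β y x]
    have h1 := hG'sym (VU.orthogonalProjectionOnto x) (VU.orthogonalProjectionOnto y)
    have h2 := real_inner_comm ((VU.orthogonalProjectionOnto x) : VU) (VU.orthogonalProjectionOnto y)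
    have h3 := real_inner_comm x y
    have h4 := real_inner_comm (G' (VU.orthogonalProjectionOnto y)) ((VU.orthogonalProjectionOnto x : VU))
    rw [h1, h4, h3, h2]
  have hcoe : ∀ x : VU, ‖(x : HU)‖ = ‖x‖ := fun x => rfl
  have hcoeY : ∀ x : VY, ‖(x : HY)‖ = ‖x‖ := fun x => rfl
  have hGtcoer : ∀ u : HU, β * ‖u‖ ^ 2 ≤ ⟪Gt u, u⟫ := by
    intro u
    rw [hGtform]
    have h1 := hG'coer (VU.orthogonalProjectionOnto u)
    have h2 := mls_pyth VU u
    rw [hcoe] at h2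
    have h3 : β * ‖u‖ ^ 2 = β * ‖VU.orthogonalProjectionOnto u‖ ^ 2
        + β * ‖u - ↑(VU.orthogonalProjectionOnto u)‖ ^ 2 := by rw [← h2]; ring
    rw [h3]
    linarith
  have hGtpos : ∀ u : HU, 0 ≤ ⟪Gt u, u⟫ := by
    intro u
    have h2 : 0 ≤ β * ‖u‖ ^ 2 := by positivity
    linarith [hGtcoer u]
  -- the core two-level comparison of G and Gt
  have hπle : ∀ u : HU, ‖VU.orthogonalProjectionOnto u‖ ≤ ‖u‖ := by
    intro u
    have h2 := mls_pyth VU u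
    rw [hcoe] at h2
    nlinarith [norm_nonneg (VU.orthogonalProjectionOnto u), norm_nonneg u,
      sq_nonneg ‖u - (↑(VU.orthogonalProjectionOnto u) : HU)‖]
  have hKu : ∀ u : HU, ‖K u‖ ≤ C * ‖u‖ := fun u =>
    (K.le_opNorm u).trans (mul_le_mul_of_nonneg_right hKC (norm_nonneg u))
  have hK'u : ∀ u : HU, ‖K' (VU.orthogonalProjectionOnto u)‖ ≤ C * ‖u‖ := by
    intro u
    refine (K'.le_opNorm _).trans ?_
    have := hπle u
    nlinarith [norm_nonneg K', norm_nonneg (VU.orthogonalProjectionOnto u), hK'C]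
  have hdiff : ∀ u : HU, ‖K u - ↑(K' (VU.orthogonalProjectionOnto u))‖ ≤ a * ‖u‖ := by
    intro u
    have h := (K - VY.subtypeL.comp (K'.comp (VU.orthogonalProjectionOnto))).le_opNorm u
    simp only [ContinuousLinearMap.sub_apply, ContinuousLinearMap.comp_apply,
      Submodule.subtypeL_apply] at h
    exact h.trans (mul_le_mul_of_nonneg_right ha (norm_nonneg u))
  have habs : ∀ u : HU,
      |‖K u‖ ^ 2 - ‖K' (VU.orthogonalProjectionOnto u)‖ ^ 2| ≤ 2 * C * a * ‖u‖ ^ 2 := by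
    intro u
    have h1 := abs_norm_sub_norm_le (K u) (↑(K' (VU.orthogonalProjectionOnto u)) : HY)
    rw [hcoeY] at h1
    have h1' := h1.trans (hdiff u)
    rw [abs_le] at h1' ⊢
    have h2 := hKu u
    have h3 := hK'u u
    have h4 : 0 ≤ ‖K u‖ := norm_nonneg _
    have h5 : 0 ≤ ‖K' (VU.orthogonalProjectionOnto u)‖ := norm_nonneg _
    constructor <;> nlinarith [h1'.1, h1'.2, mul_nonneg ha0 (norm_nonneg u)]
  have hbβ : b * β = 4 * C * a := by
    rw [hb]; field_simp
  have hGGt1 : ∀ u : HU, ⟪G u, u⟫ ≤ Real.exp b * ⟪Gt u, u⟫ := by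
    intro u
    have e1 : ⟪G u, u⟫ = ‖K u‖ ^ 2 + β * ‖u‖ ^ 2 := by
      rw [hGform, real_inner_self_eq_norm_sq, real_inner_self_eq_norm_sq]
    have e2 : ⟪Gt u, u⟫ = ‖K' (VU.orthogonalProjectionOnto u)‖ ^ 2 + β * ‖u‖ ^ 2 := by
      rw [hGtform, hG'form, real_inner_self_eq_norm_sq, real_inner_self_eq_norm_sq]
      have h2 := mls_pyth VU u
      rw [hcoe] at h2
      nlinarith
    have h6 := (abs_le.mp (habs u)).2
    have h7 : 1 + b ≤ Real.exp b := by linarith [Real.add_one_le_exp b]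
    have h8 : 0 ≤ b * (⟪Gt u, u⟫ - β * ‖u‖ ^ 2) := by
      have := hGtcoer u; nlinarith
    have h9 : 0 ≤ (Real.exp b - 1 - b) * ⟪Gt u, u⟫ :=
      mul_nonneg (by linarith) (hGtpos u)
    have h10 : 2 * C * a * ‖u‖ ^ 2 = b * β * ‖u‖ ^ 2 / 2 := by rw [hbβ]; ring
    have h11 : 0 ≤ b * β * ‖u‖ ^ 2 := by positivity
    nlinarith [h6, h7, h8, h9, h10, h11, e1, e2]
  have hGGt2 : ∀ u : HU, ⟪Gt u, u⟫ ≤ Real.exp b * ⟪G u, u⟫ := by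
    intro u
    have e1 : ⟪G u, u⟫ = ‖K u‖ ^ 2 + β * ‖u‖ ^ 2 := by
      rw [hGform, real_inner_self_eq_norm_sq, real_inner_self_eq_norm_sq]
    have e2 : ⟪Gt u, u⟫ = ‖K' (VU.orthogonalProjectionOnto u)‖ ^ 2 + β * ‖u‖ ^ 2 := by
      rw [hGtform, hG'form, real_inner_self_eq_norm_sq, real_inner_self_eq_norm_sq]
      have h2 := mls_pyth VU u
      rw [hcoe] at h2
      nlinarith
    have h6 := (abs_le.mp (habs u)).1
    have h7 : 1 + b ≤ Real.exp b := by linarith [Real.add_one_le_exp b]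
    have h8 : 0 ≤ b * (⟪G u, u⟫ - β * ‖u‖ ^ 2) := by
      have := hGcoer u; nlinarith
    have h9 : 0 ≤ (Real.exp b - 1 - b) * ⟪G u, u⟫ :=
      mul_nonneg (by linarith) (hGpos u)
    have h10 : 2 * C * a * ‖u‖ ^ 2 = b * β * ‖u‖ ^ 2 / 2 := by rw [hbβ]; ring
    have h11 : 0 ≤ b * β * ‖u‖ ^ 2 := by positivity
    nlinarith [h6, h7, h8, h9, h10, h11, e1, e2]
  -- invert the comparison
  have hprodb : Real.exp b * Real.exp (-b) = 1 := by
    rw [← Real.exp_add]; norm_num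
  have hFle : ∀ u : HU, ⟪F u, u⟫ ≤ Real.exp b * ⟪Ginv u, u⟫ := by
    intro u
    have h := mls_inv_form_le G Ginv (Real.exp b • Gt) (Real.exp (-b) • F) hGsym hGpos hG1'
      (fun v => by
        simp only [ContinuousLinearMap.smul_apply, map_smul]
        rw [hGtF, smul_smul, ← Real.exp_add, neg_add_cancel, Real.exp_zero, one_smul])
      (fun w => by
        rw [ContinuousLinearMap.smul_apply, real_inner_smul_left]
        exact hGGt1 w) u
    rw [ContinuousLinearMap.smul_apply, real_inner_smul_left] at h
    have h2 := mul_le_mul_of_nonneg_left h (Real.exp_pos b).le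
    rw [← mul_assoc, hprodb, one_mul] at h2
    exact h2
  have hGinvleF : ∀ u : HU, ⟪Ginv u, u⟫ ≤ Real.exp b * ⟪F u, u⟫ := by
    intro u
    have h := mls_inv_form_le Gt F (Real.exp b • G) (Real.exp (-b) • Ginv) hGtsym hGtpos hGtF
      (fun v => by
        simp only [ContinuousLinearMap.smul_apply, map_smul]
        rw [hG1', smul_smul, ← Real.exp_add, neg_add_cancel, Real.exp_zero, one_smul])
      (fun w => by
        rw [ContinuousLinearMap.smul_apply, real_inner_smul_left]
        exact hGGt2 w) u
    rw [ContinuousLinearMap.smul_apply, real_inner_smul_left] at h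
    have h2 := mul_le_mul_of_nonneg_left h (Real.exp_pos b).le
    rw [← mul_assoc, hprodb, one_mul] at h2
    exact h2
  -- compare EW' with F
  have hed : 1 ≤ Real.exp d := Real.one_le_exp hd0
  have hEF1 : ∀ u : HU, ⟪EW' u, u⟫ ≤ Real.exp d * ⟪F u, u⟫ := by
    intro u
    rw [hEform, hFform]
    have hq : 0 ≤ β⁻¹ * ‖u - (↑(VU.orthogonalProjectionOnto u) : HU)‖ ^ 2 := by positivity
    by_cases hπ0 : VU.orthogonalProjectionOnto u = 0
    · rw [hπ0]
      simp only [map_zero, inner_zero_left, zero_add]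
      exact le_mul_of_one_le_left (by positivity) hed
    · obtain ⟨hs1, hs2⟩ := mls_of_log (hW'pos _ hπ0) (hG'invpos _ hπ0) (hW'd _ hπ0)
      have h12 : 0 ≤ (Real.exp d - 1) * (β⁻¹ * ‖u - ↑(VU.orthogonalProjectionOnto u)‖ ^ 2) :=
        mul_nonneg (by linarith) hq
      linarith [hs1, h12]
  have hEF2 : ∀ u : HU, ⟪F u, u⟫ ≤ Real.exp d * ⟪EW' u, u⟫ := by
    intro u
    rw [hEform, hFform]
    have hq : 0 ≤ β⁻¹ * ‖u - (↑(VU.orthogonalProjectionOnto u) : HU)‖ ^ 2 := by positivity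
    by_cases hπ0 : VU.orthogonalProjectionOnto u = 0
    · rw [hπ0]
      simp only [map_zero, inner_zero_left, zero_add]
      exact le_mul_of_one_le_left (by positivity) hed
    · obtain ⟨hs1, hs2⟩ := mls_of_log (hW'pos _ hπ0) (hG'invpos _ hπ0) (hW'd _ hπ0)
      have h12 : 0 ≤ (Real.exp d - 1) * (β⁻¹ * ‖u - ↑(VU.orthogonalProjectionOnto u)‖ ^ 2) :=
        mul_nonneg (by linarith) hq
      linarith [hs2, h12]
  -- combined sandwich : EW' vs Ginv
  have hE1 : ∀ u : HU, ⟪EW' u, u⟫ ≤ Real.exp (d + b) * ⟪Ginv u, u⟫ := by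
    intro u
    rw [Real.exp_add]
    calc ⟪EW' u, u⟫ ≤ Real.exp d * ⟪F u, u⟫ := hEF1 u
      _ ≤ Real.exp d * (Real.exp b * ⟪Ginv u, u⟫) :=
          mul_le_mul_of_nonneg_left (hFle u) (Real.exp_pos d).le
      _ = Real.exp d * Real.exp b * ⟪Ginv u, u⟫ := by ring
  have hE2 : ∀ u : HU, ⟪Ginv u, u⟫ ≤ Real.exp (d + b) * ⟪EW' u, u⟫ := by
    intro u
    rw [Real.exp_add]
    calc ⟪Ginv u, u⟫ ≤ Real.exp b * ⟪F u, u⟫ := hGinvleF u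
      _ ≤ Real.exp b * (Real.exp d * ⟪EW' u, u⟫) :=
          mul_le_mul_of_nonneg_left (hEF2 u) (Real.exp_pos b).le
      _ = Real.exp d * Real.exp b * ⟪EW' u, u⟫ := by ring
  -- symmetry of EW' and of D = Ginv - EW'
  have hEsym : ∀ x y : HU, ⟪EW' x, y⟫ = ⟪x, EW' y⟫ := by
    intro x y
    rw [← real_inner_comm x (EW' y), hEW']
    rw [mls_ext_inner VU W' β⁻¹ x y, mls_ext_inner VU W' β⁻¹ y x]
    have h1 := hW'sym (VU.orthogonalProjectionOnto x) (VU.orthogonalProjectionOnto y)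
    have h2 := real_inner_comm ((VU.orthogonalProjectionOnto x) : VU) (VU.orthogonalProjectionOnto y)
    have h3 := real_inner_comm x y
    have h4 := real_inner_comm (W' (VU.orthogonalProjectionOnto y)) ((VU.orthogonalProjectionOnto x : VU))
    rw [h1, h4, h3, h2]
  have hDsym : ∀ x y : HU, ⟪(Ginv - EW') x, y⟫ = ⟪x, (Ginv - EW') y⟫ := by
    intro x y
    simp only [ContinuousLinearMap.sub_apply, inner_sub_left, inner_sub_right]
    rw [hGinvsym, hEsym]
  -- pointwise bound on D relative to Ginv
  have hs0 : 0 ≤ Real.exp (d + b) - 1 := by linarith [Real.one_le_exp hε0]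
  have hD : ∀ u : HU,
      |⟪(Ginv - EW') u, u⟫| ≤ (Real.exp (d + b) - 1) * ⟪Ginv u, u⟫ := by
    intro u
    rw [ContinuousLinearMap.sub_apply, inner_sub_left, abs_le]
    constructor
    · linarith [hE1 u]
    · have ht := Real.exp_pos (d + b)
      have h1 : 0 ≤ (Real.exp (d + b) - 1) ^ 2 * ⟪Ginv u, u⟫ :=
        mul_nonneg (sq_nonneg _) (hGinvnn u)
      have key : Real.exp (d + b) * (⟪Ginv u, u⟫ - ⟪EW' u, u⟫)
          ≤ Real.exp (d + b) * ((Real.exp (d + b) - 1) * ⟪Ginv u, u⟫) := by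
        linarith [hE2 u, h1]
      exact (mul_le_mul_iff_right₀ ht).mp key
  have hDG : ∀ x : HU,
      |⟪(Ginv - EW') (G x), G x⟫| ≤ (Real.exp (d + b) - 1) * ⟪G x, x⟫ := by
    intro x
    have h := hD (G x)
    rw [hG2' x, real_inner_comm (G x) x] at h
    exact h
  have hNewt := fun v => mls_newton G (Ginv - EW') hGsym hGpos hDsym _ hs0 hDG v
  -- the Newton identity
  have hWform : ∀ u : HU,
      ⟪W u, u⟫ = ⟪Ginv u, u⟫ - ⟪G ((Ginv - EW') u), (Ginv - EW') u⟫ := by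
    intro u
    rw [hW]
    simp only [ContinuousLinearMap.sub_apply, ContinuousLinearMap.smul_apply,
      ContinuousLinearMap.comp_apply]
    rw [inner_sub_left, real_inner_smul_left, map_sub, inner_sub_left, inner_sub_right,
      inner_sub_right]
    have e1 : ⟪EW' (G (EW' u)), u⟫ = ⟪G (EW' u), EW' u⟫ := hEsym (G (EW' u)) u
    have e2 : ⟪G (Ginv u), Ginv u⟫ = ⟪Ginv u, u⟫ := by
      rw [hG1', real_inner_comm]
    have e3 : ⟪G (EW' u), Ginv u⟫ = ⟪EW' u, u⟫ := by
      rw [hGsym, hG1']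
    have e4 : ⟪G (Ginv u), EW' u⟫ = ⟪u, EW' u⟫ := by rw [hG1']
    have e5 := real_inner_comm u (EW' u)
    linarith
  -- scalar key estimate
  have hkey : Real.exp (-(2 * (d + b) ^ 2)) ≤ 1 - (Real.exp (d + b) - 1) ^ 2 :=
    mls_key2 hε0 hε3
  -- two-sided bound for W
  have hWb : ∀ u : HU,
      Real.exp (-(2 * (d + b) ^ 2)) * ⟪Ginv u, u⟫ ≤ ⟪W u, u⟫ ∧ ⟪W u, u⟫ ≤ ⟪Ginv u, u⟫ := by
    intro u
    have hform := hWform u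
    have hN := hNewt (Ginv u)
    rw [hG1' u, ← real_inner_comm u (Ginv u)] at hN
    constructor
    · have hprod : 0 ≤ (1 - (Real.exp (d + b) - 1) ^ 2 - Real.exp (-(2 * (d + b) ^ 2)))
          * ⟪Ginv u, u⟫ :=
        mul_nonneg (by linarith [hkey]) (hGinvnn u)
      linarith only [hform, hN, hprod]
    · linarith only [hform, hGpos ((Ginv - EW') u)]
  refine ⟨⟨?_, ?_⟩, ?_, ?_⟩
  · rw [ContinuousLinearMap.isSelfAdjoint_iff_isSymmetric]
    intro x y
    simp only [ContinuousLinearMap.coe_coe]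
    rw [hW]
    simp only [ContinuousLinearMap.sub_apply, ContinuousLinearMap.smul_apply,
      ContinuousLinearMap.comp_apply]
    rw [inner_sub_left, inner_sub_right, real_inner_smul_left, real_inner_smul_right]
    have e1 := hEsym x y
    have e2 : ⟪EW' (G (EW' x)), y⟫ = ⟪x, EW' (G (EW' y))⟫ := by
      rw [hEsym (G (EW' x)) y, hGsym, hEsym x (G (EW' y))]
    linarith
  · intro u hu
    exact lt_of_lt_of_le (mul_pos (Real.exp_pos _) (hGinvpos u hu)) (hWb u).1
  · intro u hu
    have h1 := (hWb u).1
    have h2 := (hWb u).2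
    have hg := hGinvpos u hu
    have hw : 0 < ⟪W u, u⟫ :=
      lt_of_lt_of_le (mul_pos (Real.exp_pos _) hg) h1
    have hprodc : Real.exp (2 * (d + b) ^ 2) * Real.exp (-(2 * (d + b) ^ 2)) = 1 := by
      rw [← Real.exp_add]; ring_nf; exact Real.exp_zero
    refine mls_log_le hw hg ?_ ?_
    · exact h2.trans (le_mul_of_one_le_left hg.le
        (Real.one_le_exp (by positivity)))
    · have h3 := mul_le_mul_of_nonneg_left h1 (Real.exp_pos (2 * (d + b) ^ 2)).le
      rw [← mul_assoc, hprodc, one_mul] at h3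
      exact h3
  · norm_num at hd2 hb1 ⊢
    exact mls_final hd0 hd2 hb0 hb1
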